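/- Let R be a noetherian commutative ring with Krull dimension at least 1. Then Ω(R) = ℕ; that is, every proper ideal I of R satisfies ω_R(I) < ∞, and for every positive integer k there exists a proper ideal I of R with ω_R(I) = k. -/

import Mathlib

/-- A proper ideal `I` is `n`-absorbing if whenever a product of `n + 1` elements
lies in `I`, the product of some `n` of them (in increasing index order) lies in `I`. -/
def IsNAbsorbing {R : Type*} [CommRing R] (n : ℕ) (I : Ideal R) : Prop :=
  ∀ x : Fin (n + 1) → R, (∏ i, x i) ∈ I →
    ∃ ι : Fin n → Fin (n + 1), StrictMono ι ∧ (∏ j, x (ι j)) ∈ I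

/-- `omegaR I` is the smallest positive integer `n` such that `I` is `n`-absorbing,
and `∞` if no such `n` exists. -/
noncomputable def omegaR {R : Type*} [CommRing R] (I : Ideal R) : ℕ∞ :=
  sInf {w : ℕ∞ | ∃ n : ℕ, 0 < n ∧ w = (n : ℕ∞) ∧ IsNAbsorbing n I}

/-- `Ω(R)` is the set of `ω`-values of proper ideals of `R`. -/
noncomputable def OmegaSet (R : Type*) [CommRing R] : Set ℕ∞ :=
  {w | ∃ I : Ideal R, I ≠ ⊤ ∧ omegaR I = w}


section Aux

open Finset

variable {R : Type*} [CommRing R]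

lemma prod_comp_orderEmbOfFin {N k : ℕ} (x : Fin N → R) (s : Finset (Fin N))
    (h : s.card = k) :
    (∏ j, x (s.orderEmbOfFin h j)) = ∏ i ∈ s, x i := by
  have hinj : ∀ a ∈ (univ : Finset (Fin k)), ∀ b ∈ univ,
      s.orderEmbOfFin h a = s.orderEmbOfFin h b → a = b :=
    fun a _ b _ hab => (s.orderEmbOfFin h).injective hab
  have himg : univ.image (fun j => s.orderEmbOfFin h j) = s := by
    apply Finset.eq_of_subset_of_card_le
    · intro a ha
      rcases Finset.mem_image.1 ha with ⟨j, _, rfl⟩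
      exact s.orderEmbOfFin_mem h j
    · rw [Finset.card_image_of_injective _ (s.orderEmbOfFin h).injective, card_univ,
        Fintype.card_fin, h]
  calc (∏ j, x (s.orderEmbOfFin h j))
      = ∏ i ∈ univ.image (fun j => s.orderEmbOfFin h j), x i := (Finset.prod_image hinj).symm
    _ = ∏ i ∈ s, x i := by rw [himg]

lemma isNAbsorbing_of_forall_exists {n : ℕ} {I : Ideal R}
    (h : ∀ x : Fin (n + 1) → R, (∏ i, x i) ∈ I →
      ∃ t : Finset (Fin (n + 1)), t.card = n ∧ (∏ i ∈ t, x i) ∈ I) :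
    IsNAbsorbing n I := by
  intro x hx
  obtain ⟨t, ht, hp⟩ := h x hx
  exact ⟨fun j => t.orderEmbOfFin ht j, (t.orderEmbOfFin ht).strictMono,
    by rwa [prod_comp_orderEmbOfFin]⟩

lemma IsNAbsorbing.finset {n : ℕ} {I : Ideal R} (h : IsNAbsorbing n I)
    {N : ℕ} (x : Fin N → R) (s : Finset (Fin N)) (hs : s.card = n + 1)
    (hp : (∏ i ∈ s, x i) ∈ I) :
    ∃ t ⊆ s, t.card = n ∧ (∏ i ∈ t, x i) ∈ I := by
  obtain ⟨ι, hι, hmem⟩ := h (fun j => x (s.orderEmbOfFin hs j))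
    (by rwa [prod_comp_orderEmbOfFin])
  refine ⟨univ.image (fun j => s.orderEmbOfFin hs (ι j)), ?_, ?_, ?_⟩
  · intro a ha
    rcases Finset.mem_image.1 ha with ⟨j, _, rfl⟩
    exact s.orderEmbOfFin_mem hs _
  · have hinj2 : Function.Injective (fun j => s.orderEmbOfFin hs (ι j)) :=
      fun a b hab => hι.injective ((s.orderEmbOfFin hs).injective hab)
    rw [Finset.card_image_of_injective _ hinj2, card_univ, Fintype.card_fin]
  · rwa [Finset.prod_image
      (fun a _ b _ hab => hι.injective ((s.orderEmbOfFin hs).injective hab))]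

lemma IsNAbsorbing.finset_le {n : ℕ} {I : Ideal R} (h : IsNAbsorbing n I) :
    ∀ (k N : ℕ) (x : Fin N → R) (s : Finset (Fin N)), s.card = k → n ≤ k →
      (∏ i ∈ s, x i) ∈ I → ∃ t ⊆ s, t.card = n ∧ (∏ i ∈ t, x i) ∈ I := by
  intro k
  induction k using Nat.strong_induction_on with
  | _ k IH =>
  intro N x s hs hnk hp
  rcases eq_or_lt_of_le hnk with heq | hlt
  · exact ⟨s, Finset.Subset.refl s, by omega, hp⟩
  rcases eq_or_lt_of_le (Nat.succ_le_of_lt hlt) with heq1 | hlt1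
  · exact h.finset x s (by omega) hp
  have h2 : 1 < s.card := by omega
  obtain ⟨a, ha, b, hb, hab⟩ := Finset.one_lt_card.1 h2
  set y : Fin N → R := Function.update x a (x a * x b) with hy_def
  have hminor : ∀ (u : Finset (Fin N)), a ∉ u → (∏ i ∈ u, y i) = ∏ i ∈ u, x i := by
    intro u hau
    exact Finset.prod_congr rfl fun i hi => Function.update_of_ne (fun hia => hau (by rw [← hia]; exact hi)) _ _
  have haeb : a ∈ s.erase b := Finset.mem_erase.2 ⟨hab, ha⟩
  have hy : (∏ i ∈ s.erase b, y i) ∈ I := by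
    have e1 : (∏ i ∈ s.erase b, y i) = y a * ∏ i ∈ (s.erase b).erase a, y i :=
      (Finset.mul_prod_erase _ _ haeb).symm
    have e2 : (∏ i ∈ s, x i) = x b * (x a * ∏ i ∈ (s.erase b).erase a, x i) := by
      rw [Finset.mul_prod_erase _ _ haeb, Finset.mul_prod_erase _ _ hb]
    have e3 : (∏ i ∈ (s.erase b).erase a, y i) = ∏ i ∈ (s.erase b).erase a, x i :=
      hminor _ (Finset.notMem_erase a _)
    rw [e1, e3]
    have hya : y a = x a * x b := Function.update_self _ _ _
    rw [hya]
    rw [e2] at hp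
    convert hp using 1
    ring
  obtain ⟨t, hts, htc, htp⟩ := IH (k - 1) (by omega) N y (s.erase b)
    (by rw [Finset.card_erase_of_mem hb]; omega) (by omega) hy
  by_cases hat : a ∈ t
  · have hbt : b ∉ t := fun hbt => (Finset.mem_erase.1 (hts hbt)).1 rfl
    have hins : (insert b t).card = n + 1 := by
      rw [Finset.card_insert_of_notMem hbt, htc]
    have hprod : (∏ i ∈ insert b t, x i) ∈ I := by
      have e1 : (∏ i ∈ insert b t, x i) = x b * (x a * ∏ i ∈ t.erase a, x i) := by
        rw [Finset.prod_insert hbt, Finset.mul_prod_erase _ _ hat]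
      have hya : y a = x a * x b := Function.update_self _ _ _
      have e2 : (∏ i ∈ t, y i) = (x a * x b) * ∏ i ∈ t.erase a, x i := by
        rw [← Finset.mul_prod_erase _ y hat, hminor _ (Finset.notMem_erase a _), hya]
      rw [e1]
      rw [e2] at htp
      convert htp using 1
      ring
    obtain ⟨t', ht', hc', hp'⟩ := h.finset x (insert b t) hins hprod
    refine ⟨t', ?_, hc', hp'⟩
    intro i hi
    rcases Finset.mem_insert.1 (ht' hi) with rfl | hit
    · exact hb
    · exact Finset.erase_subset _ _ (hts hit)
  · refine ⟨t, fun i hi => Finset.erase_subset _ _ (hts hi), htc, ?_⟩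
    rwa [hminor _ hat] at htp

lemma IsNAbsorbing.inf {m n : ℕ} {I J : Ideal R} (hI : IsNAbsorbing m I) (hJ : IsNAbsorbing n J) :
    IsNAbsorbing (m + n) (I ⊓ J) := by
  apply isNAbsorbing_of_forall_exists
  intro x hx
  have hxI : (∏ i ∈ univ, x i) ∈ I := hx.1
  have hxJ : (∏ i ∈ univ, x i) ∈ J := hx.2
  obtain ⟨t₁, _, hc₁, hp₁⟩ := hI.finset_le (m + n + 1) _ x univ (by simp) (by omega) hxI
  obtain ⟨t₂, _, hc₂, hp₂⟩ := hJ.finset_le (m + n + 1) _ x univ (by simp) (by omega) hxJ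
  have hcu : (t₁ ∪ t₂).card ≤ m + n := le_trans (Finset.card_union_le _ _) (by omega)
  obtain ⟨u, hu₁, _, hu₃⟩ := Finset.exists_subsuperset_card_eq (Finset.subset_univ (t₁ ∪ t₂))
    hcu (by rw [card_univ, Fintype.card_fin]; omega)
  refine ⟨u, hu₃, ?_, ?_⟩
  · have h1 : t₁ ⊆ u := le_trans Finset.subset_union_left hu₁
    rw [← Finset.prod_sdiff h1]
    exact I.mul_mem_left _ hp₁
  · have h1 : t₂ ⊆ u := le_trans Finset.subset_union_right hu₁
    rw [← Finset.prod_sdiff h1]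
    exact J.mul_mem_left _ hp₂

lemma prod_mem_pow {ι : Type*} (P : Ideal R) (s : Finset ι) (f : ι → R)
    (hf : ∀ i ∈ s, f i ∈ P) : (∏ i ∈ s, f i) ∈ P ^ s.card := by
  classical
  induction s using Finset.cons_induction with
  | empty => simp [Ideal.one_eq_top]
  | cons a s ha IH =>
    rw [Finset.prod_cons, Finset.card_cons, pow_succ']
    exact Ideal.mul_mem_mul (hf a (Finset.mem_cons_self _ _))
      (IH fun i hi => hf i (Finset.mem_cons_of_mem hi))

lemma Ideal.IsPrimary.isNAbsorbing {Q : Ideal R} (hQ : Q.IsPrimary) {n : ℕ} (hn : 0 < n)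
    (h : Q.radical ^ n ≤ Q) : IsNAbsorbing n Q := by
  apply isNAbsorbing_of_forall_exists
  intro x hx
  by_cases hex : ∃ i, (∏ j ∈ univ.erase i, x j) ∈ Q
  · obtain ⟨i, hi⟩ := hex
    exact ⟨univ.erase i, by rw [Finset.card_erase_of_mem (mem_univ _)]; simp, hi⟩
  · push_neg at hex
    have hall : ∀ i, x i ∈ Q.radical := by
      intro i
      have hmul : (∏ j ∈ univ.erase i, x j) * x i ∈ Q := by
        rw [Finset.prod_erase_mul _ _ (mem_univ i)]
        exact hx
    
      rcases (Ideal.isPrimary_iff.1 hQ).2 hmul with hc | hc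
      · exact absurd hc (hex i)
      · exact hc
    refine ⟨univ.erase 0, by rw [Finset.card_erase_of_mem (mem_univ _)]; simp, ?_⟩
    have hcard : (univ.erase (0 : Fin (n + 1))).card = n := by
      rw [Finset.card_erase_of_mem (mem_univ _)]; simp
    have := prod_mem_pow Q.radical (univ.erase (0 : Fin (n + 1))) x (fun i _ => hall i)
    rw [hcard] at this
    exact h this

lemma omegaR_eq {I : Ideal R} {k : ℕ} (hk : 0 < k) (habs : IsNAbsorbing k I)
    (hmin : ∀ n : ℕ, 0 < n → IsNAbsorbing n I → k ≤ n) : omegaR I = k := by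
  apply le_antisymm
  · exact sInf_le ⟨k, hk, rfl, habs⟩
  · apply le_sInf
    rintro w ⟨n, hn, rfl, habs'⟩
    exact_mod_cast hmin n hn habs'

lemma omegaR_exists_eq {I : Ideal R} (h : ∃ n : ℕ, 0 < n ∧ IsNAbsorbing n I) :
    ∃ k : ℕ, 0 < k ∧ omegaR I = k := by
  have hmem := Nat.sInf_mem h
  refine ⟨sInf {n : ℕ | 0 < n ∧ IsNAbsorbing n I}, hmem.1, omegaR_eq hmem.1 hmem.2 ?_⟩
  intro n hn habs
  exact Nat.sInf_le ⟨hn, habs⟩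

lemma omegaR_ne_top {I : Ideal R} (h : ∃ n : ℕ, 0 < n ∧ IsNAbsorbing n I) :
    omegaR I ≠ ⊤ := by
  obtain ⟨k, _, hk⟩ := omegaR_exists_eq h
  rw [hk]
  exact ENat.coe_ne_top k

lemma isNAbsorbing_comap_iff {S : Type*} [CommRing S] (f : R →+* S)
    (hf : Function.Surjective f) (J : Ideal S) (n : ℕ) :
    IsNAbsorbing n (J.comap f) ↔ IsNAbsorbing n J := by
  constructor
  · intro h y hy
    choose x hx using fun i => hf (y i)
    have hmem : (∏ i, x i) ∈ J.comap f := by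
      rw [Ideal.mem_comap, map_prod]
      simpa [hx] using hy
    obtain ⟨ι, hι, hm⟩ := h x hmem
    refine ⟨ι, hι, ?_⟩
    rw [Ideal.mem_comap, map_prod] at hm
    simpa [hx] using hm
  · intro h x hx
    rw [Ideal.mem_comap, map_prod] at hx
    obtain ⟨ι, hι, hm⟩ := h (fun i => f (x i)) hx
    refine ⟨ι, hι, ?_⟩
    rw [Ideal.mem_comap, map_prod]
    exact hm

lemma omegaR_comap {S : Type*} [CommRing S] (f : R →+* S)
    (hf : Function.Surjective f) (J : Ideal S) :
    omegaR (J.comap f) = omegaR J := by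
  unfold omegaR
  congr 1
  ext w
  constructor
  · rintro ⟨n, h1, rfl, h3⟩
    exact ⟨n, h1, rfl, (isNAbsorbing_comap_iff f hf J n).1 h3⟩
  · rintro ⟨n, h1, rfl, h3⟩
    exact ⟨n, h1, rfl, (isNAbsorbing_comap_iff f hf J n).2 h3⟩

lemma exists_isNAbsorbing_of_isPrimary {Q : Ideal R} [IsNoetherianRing R]
    (hQ : Q.IsPrimary) : ∃ n : ℕ, 0 < n ∧ IsNAbsorbing n Q := by
  obtain ⟨n, hn⟩ := Ideal.exists_radical_pow_le_of_fg Q (IsNoetherian.noetherian _)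
  refine ⟨max n 1, by omega, hQ.isNAbsorbing (by omega) ?_⟩
  exact le_trans (Ideal.pow_le_pow_right (le_max_left n 1)) hn

theorem exists_isNAbsorbing [IsNoetherianRing R] (I : Ideal R) (hI : I ≠ ⊤) :
    ∃ n : ℕ, 0 < n ∧ IsNAbsorbing n I := by
  obtain ⟨s, hs, hprim⟩ := Ideal.isLasker R R I
  have key : ∀ s : Finset (Ideal R), (∀ J ∈ s, Ideal.IsPrimary J) → s.Nonempty →
      ∃ n : ℕ, 0 < n ∧ IsNAbsorbing n (s.inf id) := by
    intro s
    induction s using Finset.cons_induction with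
    | empty => intro _ h; exact absurd h (by simp)
    | cons a s ha IH =>
      intro hprim _
      rcases Finset.eq_empty_or_nonempty s with rfl | hne
      · obtain ⟨n, hn, habs⟩ := exists_isNAbsorbing_of_isPrimary
          (hprim a (Finset.mem_cons_self _ _))
        exact ⟨n, hn, by simpa using habs⟩
      · obtain ⟨n₁, hn₁, h₁⟩ := exists_isNAbsorbing_of_isPrimary
          (hprim a (Finset.mem_cons_self _ _))
        obtain ⟨n₂, hn₂, h₂⟩ := IH (fun J hJ => hprim J (Finset.mem_cons_of_mem hJ)) hne
        refine ⟨n₁ + n₂, by omega, ?_⟩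
        rw [Finset.inf_cons]
        exact h₁.inf h₂
  have hne : s.Nonempty := by
    rcases Finset.eq_empty_or_nonempty s with rfl | h
    · simp at hs
      exact absurd hs.symm hI
    · exact h
  obtain ⟨n, hn, habs⟩ := key s hprim hne
  exact ⟨n, hn, hs ▸ habs⟩

open Pointwise in
lemma exists_mem_pow_not_mem {D : Type*} [CommRing D] [IsDomain D] [IsNoetherianRing D]
    {m : Ideal D} (hm : m ≠ ⊤) (hb : m ≠ ⊥) {k : ℕ} (hk : 0 < k) :
    ∃ a ∈ m, a ^ (k - 1) ∉ m ^ k := by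
  classical
  rcases eq_or_lt_of_le (Nat.succ_le_of_lt hk) with h1 | h2
  · refine ⟨0, zero_mem _, ?_⟩
    rw [← h1]
    simpa [pow_one] using (Ideal.ne_top_iff_one m).1 hm
  by_contra hcon
  push_neg at hcon
  obtain ⟨s, hspan⟩ := IsNoetherian.noetherian m
  have hsne : s.Nonempty := by
    rcases Finset.eq_empty_or_nonempty s with rfl | h
    · simp at hspan
      exact (hb hspan.symm).elim
    · exact h
  set r := s.card with hr
  have hrpos : 0 < r := Finset.card_pos.2 hsne
  set N := r * (k - 1) with hN
  have hNpos : 0 < N := by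
    have : 0 < k - 1 := by omega
    positivity
  have key : m ^ N ≤ m ^ (N + 1) := by
    conv_lhs => rw [← hspan]
    rw [Submodule.span_pow, Submodule.span_le]
    rintro a ha
    rw [Set.mem_pow] at ha
    obtain ⟨f, hf⟩ := ha
    rw [List.prod_ofFn] at hf
    have hmaps : ∀ i ∈ (univ : Finset (Fin N)), (f i : D) ∈ s := by
      intro i _
      exact (f i).2
    have hcard : s.card * (k - 2) < (univ : Finset (Fin N)).card := by
      rw [card_univ, Fintype.card_fin, hN]
      have h3 : k - 2 < k - 1 := by omega
      exact Nat.mul_lt_mul_of_le_of_lt (le_refl r) h3 hrpos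
    obtain ⟨b, hbs, hfib⟩ := Finset.exists_lt_card_fiber_of_mul_lt_card_of_maps_to hmaps hcard
    set F := univ.filter (fun i : Fin N => (f i : D) = b) with hF
    have hFc : k - 1 ≤ F.card := by omega
    have hFN : F.card ≤ N := by
      calc F.card ≤ (univ : Finset (Fin N)).card := Finset.card_le_card (Finset.subset_univ _)
        _ = N := by rw [card_univ, Fintype.card_fin]
    have hbm : b ∈ m := by
      rw [← hspan]
      exact Ideal.subset_span hbs
    have hsplit : (∏ i ∈ F, (f i : D)) * ∏ i ∈ Fᶜ, (f i : D) = a := by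
      rw [Finset.prod_mul_prod_compl]
      exact hf
    have h1 : (∏ i ∈ F, (f i : D)) ∈ m ^ (F.card + 1) := by
      have hprodF : (∏ i ∈ F, (f i : D)) = b ^ F.card := by
        rw [Finset.prod_congr rfl (fun i hi => (Finset.mem_filter.1 hi).2), Finset.prod_const]
      rw [hprodF]
      have hpowsplit : b ^ F.card = b ^ (k - 1) * b ^ (F.card - (k - 1)) := by
        rw [← pow_add]
        congr 1
        omega
      rw [hpowsplit]
      have hmul : m ^ k * m ^ (F.card - (k - 1)) = m ^ (F.card + 1) := by
        rw [← pow_add]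
        congr 1
        omega
      rw [← hmul]
      exact Ideal.mul_mem_mul (hcon b hbm) (Ideal.pow_mem_pow hbm _)
    have h2 : (∏ i ∈ Fᶜ, (f i : D)) ∈ m ^ (Fᶜ.card) := by
      apply prod_mem_pow
      intro i _
      rw [← hspan]
      exact Ideal.subset_span (f i).2
    have hcards : F.card + 1 + Fᶜ.card = N + 1 := by
      have := Finset.card_add_card_compl F
      rw [Fintype.card_fin] at this
      omega
    rw [← hsplit, ← hcards, pow_add]
    exact Ideal.mul_mem_mul h1 h2
  have heq : ∀ j : ℕ, m ^ (N + j) = m ^ N := by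
    intro j
    induction j with
    | zero => rfl
    | succ j IH =>
      have e1 : m ^ (N + (j + 1)) = m ^ (N + j) * m := by rw [← pow_succ, Nat.add_succ]
      rw [e1, IH]
      apply le_antisymm
      · rw [← pow_succ]
        exact Ideal.pow_le_pow_right (by omega)
      · calc m ^ N ≤ m ^ (N + 1) := key
          _ = m ^ N * m := by rw [pow_succ]
  have hbot : m ^ N ≤ ⊥ := by
    rw [← Ideal.iInf_pow_eq_bot_of_isDomain m hm]
    apply le_iInf
    intro i
    rcases le_total i N with h | h
    · exact Ideal.pow_le_pow_right h
    · rw [show i = N + (i - N) by omega, heq (i - N)]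
  obtain ⟨a, ham, ha0⟩ := Submodule.exists_mem_ne_zero_of_ne_bot hb
  have hzero : a ^ N ∈ (⊥ : Ideal D) := hbot (Ideal.pow_mem_pow ham N)
  rw [Ideal.mem_bot] at hzero
  exact ha0 (pow_eq_zero_iff hNpos.ne' |>.1 hzero)

lemma not_isNAbsorbing_pow {m : Ideal R} {a : R} (ham : a ∈ m) {k n : ℕ}
    (hn : 0 < n) (hnk : n < k) (hak : a ^ (k - 1) ∉ m ^ k) : ¬ IsNAbsorbing n (m ^ k) := by
  classical
  intro h
  set d : Fin (n + 1) → ℕ := fun v => if v = 0 then k - n else 1 with hd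
  set x : Fin (n + 1) → R := fun v => a ^ d v with hx
  have hsum0 : (∑ i, d i) = k := by
    rw [Fin.sum_univ_succ]
    have e0 : d 0 = k - n := if_pos rfl
    have e1 : ∀ i : Fin n, d i.succ = 1 := fun i => if_neg (Fin.succ_ne_zero i)
    rw [e0, Finset.sum_congr rfl (fun i _ => e1 i), Finset.sum_const]
    simp
    omega
  have hprod : (∏ i, x i) ∈ m ^ k := by
    have : (∏ i, x i) = a ^ (∑ i, d i) := by
      rw [hx, Finset.prod_pow_eq_pow_sum]
    rw [this, hsum0]
    exact Ideal.pow_mem_pow ham k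
  obtain ⟨ι, hι, hmem⟩ := h x hprod
  have hprodι : (∏ j, x (ι j)) = a ^ (∑ j, d (ι j)) := by
    rw [hx, Finset.prod_pow_eq_pow_sum]
  set F := univ.filter (fun j : Fin n => ι j = 0) with hF
  have hF1 : F.card ≤ 1 := by
    apply Finset.card_le_one.2
    intro i hi j hj
    have hi' := (Finset.mem_filter.1 hi).2
    have hj' := (Finset.mem_filter.1 hj).2
    exact hι.injective (hi'.trans hj'.symm)
  have hsplit : (∑ j, d (ι j)) = F.card * (k - n) + Fᶜ.card := by
    rw [← Finset.sum_filter_add_sum_filter_not univ (fun j : Fin n => ι j = 0)]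
    congr 1
    · rw [Finset.sum_congr rfl (fun j hj => ?_), Finset.sum_const, smul_eq_mul]
      rw [hd]
      exact if_pos (Finset.mem_filter.1 hj).2
    · rw [Finset.sum_congr rfl (fun j hj => ?_), Finset.sum_const, smul_eq_mul, mul_one]
      · rw [hF, Finset.compl_filter]
      · rw [hd]
        exact if_neg (Finset.mem_filter.1 hj).2
  have hcards : F.card + Fᶜ.card = n := by
    have := Finset.card_add_card_compl F
    rwa [Fintype.card_fin] at this
  have hsum : (∑ j, d (ι j)) ≤ k - 1 := by
    rcases Nat.le_one_iff_eq_zero_or_eq_one.1 hF1 with h0 | h0 <;>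
      rw [hsplit, h0] <;> omega
  apply hak
  have hdecomp : a ^ (k - 1) = (a ^ (∑ j, d (ι j))) * a ^ (k - 1 - ∑ j, d (ι j)) := by
    rw [← pow_add]
    congr 1
    omega
  rw [hdecomp]
  exact Ideal.mul_mem_right _ _ (hprodι ▸ hmem)

lemma omegaR_pow_maximal {D : Type*} [CommRing D] {m : Ideal D} (hmax : m.IsMaximal)
    {k : ℕ} (hk : 0 < k) (ha : ∃ a ∈ m, a ^ (k - 1) ∉ m ^ k) :
    omegaR (m ^ k) = k := by
  have hrad : (m ^ k).radical = m := by
    rw [Ideal.radical_pow m hk.ne', hmax.isPrime.radical]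
  have hprim : (m ^ k).IsPrimary := Ideal.isPrimary_of_isMaximal_radical (by rw [hrad]; exact hmax)
  have habs : IsNAbsorbing k (m ^ k) := hprim.isNAbsorbing hk (by rw [hrad])
  apply omegaR_eq hk habs
  intro n hn habs'
  by_contra hlt
  push_neg at hlt
  obtain ⟨a, ham, hak⟩ := ha
  exact not_isNAbsorbing_pow ham hn hlt hak habs'

lemma exists_lt_primeSpectrum (hdim : 1 ≤ ringKrullDim R) :
    ∃ p q : PrimeSpectrum R, p < q := by
  by_contra hcon
  push_neg at hcon
  have hle : ringKrullDim R ≤ 0 := by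
    show Order.krullDim (PrimeSpectrum R) ≤ 0
    rw [Order.krullDim]
    apply iSup_le
    intro p
    have hlen : p.length = 0 := by
      by_contra h0
      exact absurd (p.step ⟨0, Nat.pos_of_ne_zero h0⟩) (hcon _ _)
    rw [hlen]
    exact le_refl _
  have : (1 : WithBot ℕ∞) ≤ 0 := le_trans hdim hle
  norm_num at this

theorem omega_attained [IsNoetherianRing R] (hdim : 1 ≤ ringKrullDim R)
    (k : ℕ) (hk : 0 < k) : ∃ I : Ideal R, I ≠ ⊤ ∧ omegaR I = (k : ℕ∞) := by
  obtain ⟨p, q, hpq⟩ := exists_lt_primeSpectrum hdim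
  set P := p.asIdeal with hP
  haveI : P.IsPrime := p.isPrime
  set f := Ideal.Quotient.mk P with hf
  have hfs : Function.Surjective f := Ideal.Quotient.mk_surjective
  obtain ⟨x, hxq, hxp⟩ := SetLike.exists_of_lt ((PrimeSpectrum.asIdeal_lt_asIdeal p q).2 hpq)
  have hx0 : f x ≠ 0 := by
    rw [Ne, Ideal.Quotient.eq_zero_iff_mem]
    exact hxp
  have hxu : ¬ IsUnit (f x) := by
    intro hu
    obtain ⟨b, hb⟩ := hu.exists_right_inv
    obtain ⟨y, rfl⟩ := hfs b
    have hmem : x * y - 1 ∈ P := by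
      rw [← Ideal.Quotient.eq_zero_iff_mem]
      show f (x * y - 1) = 0
      rw [map_sub, map_mul, map_one, hb, sub_self]
    have hPq : P ≤ q.asIdeal := le_of_lt ((PrimeSpectrum.asIdeal_lt_asIdeal p q).2 hpq)
    have h1 : (1 : R) ∈ q.asIdeal := by
      have hxy : x * y ∈ q.asIdeal := q.asIdeal.mul_mem_right y hxq
      have := q.asIdeal.sub_mem hxy (hPq hmem)
      simpa using this
    exact (Ideal.ne_top_iff_one _).1 q.isPrime.ne_top h1
  obtain ⟨M, hM, hxM⟩ := Ideal.exists_le_maximal (Ideal.span {f x})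
    (by rw [Ne, Ideal.span_singleton_eq_top]; exact hxu)
  have hMb : M ≠ ⊥ := by
    intro hbot
    apply hx0
    have : f x ∈ M := hxM (Ideal.mem_span_singleton_self _)
    rw [hbot] at this
    simpa [Ideal.mem_bot] using this
  obtain ⟨a, ham, hak⟩ := exists_mem_pow_not_mem hM.ne_top hMb hk
  have homega : omegaR (M ^ k) = (k : ℕ∞) := omegaR_pow_maximal hM hk ⟨a, ham, hak⟩
  refine ⟨(M ^ k).comap f, ?_, ?_⟩
  · intro htop
    have h1 : (1 : R ⧸ P) ∈ M ^ k := by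
      have : (1 : R) ∈ (M ^ k).comap f := htop ▸ Submodule.mem_top
      simpa using this
    have : M ^ k ≤ M := Ideal.pow_le_self hk.ne'
    exact (Ideal.ne_top_iff_one _).1 hM.ne_top (this h1)
  · rw [omegaR_comap f hfs]
    exact homega

end Aux

/-- For a noetherian ring of Krull dimension at least `1`, `Ω(R) = ℕ`: every proper
ideal has finite `ω`-value and every positive integer is attained. -/
theorem omegaSet_noetherian {R : Type*} [CommRing R] [IsNoetherianRing R]
    (hdim : 1 ≤ ringKrullDim R) :
    OmegaSet R = {w : ℕ∞ | ∃ k : ℕ, 0 < k ∧ w = (k : ℕ∞)} ∧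
    (∀ I : Ideal R, I ≠ ⊤ → omegaR I ≠ ⊤) ∧
    (∀ k : ℕ, 0 < k → ∃ I : Ideal R, I ≠ ⊤ ∧ omegaR I = (k : ℕ∞)) := by
  have part2 : ∀ I : Ideal R, I ≠ ⊤ → omegaR I ≠ ⊤ :=
    fun I hI => omegaR_ne_top (exists_isNAbsorbing I hI)
  have part3 : ∀ k : ℕ, 0 < k → ∃ I : Ideal R, I ≠ ⊤ ∧ omegaR I = (k : ℕ∞) :=
    fun k hk => omega_attained hdim k hk
  refine ⟨?_, part2, part3⟩
  ext w
  constructor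
  · rintro ⟨I, hI, rfl⟩
    obtain ⟨k, hk, hke⟩ := omegaR_exists_eq (exists_isNAbsorbing I hI)
    exact ⟨k, hk, hke⟩
  · rintro ⟨k, hk, rfl⟩
    obtain ⟨I, hI, hIk⟩ := part3 k hk
    exact ⟨I, hI, hIk⟩
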